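/- Let a word w over S be the concatenation w = w₁w₂ of words w₁ and w₂, and let p, q ∈ S be such that (w₁)_G = p⁻¹q in G. Then wS = w₁S ∩ p⁻¹(q(w₂S)). -/

import Mathlib

/-- The action of a word over `S` (a list of pairs `(p, ε)` with `p ∈ S` and
`ε ∈ {+1, −1}` encoded as a `Bool`) on subsets of `S`:
`p^{+1} X = {p x : x ∈ X}` and `p^{−1} X = {q ∈ S : p q ∈ X}`. -/
def wordAct {G : Type*} [Group G] (S : Set G) : List (G × Bool) → Set G → Set G
  | [], X => X
  | l :: w, X =>
    if l.2 then (fun x => l.1 * x) '' wordAct S w X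
    else {q | q ∈ S ∧ l.1 * q ∈ wordAct S w X}

/-- Evaluation `(w)_G = p₁^{ε₁} ⋯ pₙ^{εₙ}` of a word in the group `G`. -/
def wordEval {G : Type*} [Group G] : List (G × Bool) → G
  | [] => 1
  | l :: w => (if l.2 then l.1 else l.1⁻¹) * wordEval w

lemma wordAct_append {G : Type*} [Group G] (S : Set G) (w₁ w₂ : List (G × Bool)) (X : Set G) :
    wordAct S (w₁ ++ w₂) X = wordAct S w₁ (wordAct S w₂ X) := by
  induction w₁ with
  | nil => rfl
  | cons l w ih => simp [wordAct, ih]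

lemma wordAct_subset {G : Type*} [Group G] (S : Submonoid G) (w : List (G × Bool))
    (h : ∀ l ∈ w, l.1 ∈ S) (X : Set G) (hX : X ⊆ S) :
    wordAct (S : Set G) w X ⊆ S := by
  induction w with
  | nil => exact hX
  | cons l w ih =>
    intro x hx
    rcases l with ⟨a, ε⟩
    have ha : a ∈ S := h _ List.mem_cons_self
    have ih' := ih (fun l hl => h l (List.mem_cons_of_mem _ hl))
    cases ε with
    | false => exact hx.1
    | true =>
      rcases hx with ⟨y, hy, rfl⟩
      exact S.mul_mem ha (ih' hy)

lemma mem_wordAct_iff {G : Type*} [Group G] (S : Set G) (w : List (G × Bool)) {Y : Set G}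
    (hY : Y ⊆ S) (x : G) :
    x ∈ wordAct S w Y ↔ x ∈ wordAct S w S ∧ (wordEval w)⁻¹ * x ∈ Y := by
  induction w generalizing x with
  | nil =>
    simp only [wordAct, wordEval, inv_one, one_mul]
    exact ⟨fun h => ⟨hY h, h⟩, fun h => h.2⟩
  | cons l w ih =>
    rcases l with ⟨a, ε⟩
    cases ε with
    | true =>
      simp only [wordAct, wordEval, if_true, Set.image_mul_left, Set.mem_preimage,
        mul_inv_rev, mul_assoc]
      exact ih _
    | false =>
      simp only [wordAct, wordEval, Bool.false_eq_true, if_false, Set.mem_setOf_eq, mul_inv_rev, inv_inv,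
        mul_assoc, ih (a * x)]
      tauto

/-- Let a word `w` over `S` be the concatenation `w = w₁w₂`, and let `p, q ∈ S`
be such that `(w₁)_G = p⁻¹q` in `G`.  Then `wS = w₁S ∩ p⁻¹(q(w₂S))`, where
`q(·)` is the translation `qX = {qx : x ∈ X}` and `p⁻¹(·)` is the translation
`p⁻¹X = {x ∈ S : px ∈ X}`. -/
theorem word_concat_act_eq_inter {G : Type*} [Group G] (S : Submonoid G)
    (w₁ w₂ : List (G × Bool)) (h₁ : ∀ l ∈ w₁, l.1 ∈ S) (h₂ : ∀ l ∈ w₂, l.1 ∈ S)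
    (p q : G) (hp : p ∈ S) (hq : q ∈ S) (hpq : wordEval w₁ = p⁻¹ * q) :
    wordAct (S : Set G) (w₁ ++ w₂) (S : Set G) =
      wordAct (S : Set G) w₁ (S : Set G) ∩
        {x | x ∈ (S : Set G) ∧
          p * x ∈ (fun y => q * y) '' wordAct (S : Set G) w₂ (S : Set G)} := by
  have hY : wordAct (S : Set G) w₂ (S : Set G) ⊆ S :=
    wordAct_subset S w₂ h₂ _ le_rfl
  have hW : wordAct (S : Set G) w₁ (S : Set G) ⊆ S :=
    wordAct_subset S w₁ h₁ _ le_rfl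
  ext x
  rw [wordAct_append, mem_wordAct_iff _ _ hY]
  simp only [Set.mem_inter_iff, Set.mem_setOf_eq, Set.image_mul_left, Set.mem_preimage, hpq,
    mul_inv_rev, inv_inv, mul_assoc]
  constructor
  · rintro ⟨h1, h2⟩
    exact ⟨h1, hW h1, h2⟩
  · rintro ⟨h1, _, h2⟩
    exact ⟨h1, h2⟩
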